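/- Let N be a natural number and m an integer with 0 ≤ m ≤ N and N + m even, and set μ = (N+m)/2. Then the number of walks of length N from 0 to m all of whose partial sums are ≥ −2 equals ((m+3)·((m+1)(m+5) + 3(N+1)²) / (4(μ+1)(μ+2)(μ+3))) · C(N, μ), where this quotient is an equality of rational numbers with the cardinality cast to ℚ. -/

import Mathlib

lemma prefix_snoc (N : ℕ) (t : Fin N → ℤ) (x : ℤ) {j : ℕ} (hj : j ≤ N) :
    (∑ i ∈ Finset.univ.filter (fun i : Fin (N+1) => (i : ℕ) < j), Fin.snoc t x i)
      = ∑ i ∈ Finset.univ.filter (fun i : Fin N => (i : ℕ) < j), t i := by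
  have hset : (Finset.univ.filter (fun i : Fin (N+1) => (i:ℕ) < j)) =
      (Finset.univ.filter (fun i : Fin N => (i:ℕ) < j)).map Fin.castSuccEmb := by
    ext i
    simp only [Finset.mem_filter, Finset.mem_univ, true_and, Finset.mem_map]
    constructor
    · intro hi
      refine ⟨⟨(i:ℕ), by omega⟩, by simpa using hi, ?_⟩
      simp [Fin.castSuccEmb, Fin.ext_iff]
    · rintro ⟨a, ha, rfl⟩
      simpa [Fin.castSuccEmb] using ha
  rw [hset, Finset.sum_map]
  refine Finset.sum_congr rfl fun i _ => ?_
  rw [show Fin.castSuccEmb i = Fin.castSucc i from rfl]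
  simp

def WalkP (N : ℕ) (m : ℤ) (s : Fin N → ℤ) : Prop :=
  (∀ j, s j = -1 ∨ s j = 1) ∧
  (∑ i, s i) = m ∧
  ∀ j ≤ N, -2 ≤ (∑ i ∈ Finset.univ.filter (fun i : Fin N => (i : ℕ) < j), s i)

noncomputable def g (N : ℕ) (m : ℤ) : ℕ := Nat.card {s : Fin N → ℤ // WalkP N m s}

lemma filter_all (M : ℕ) :
    Finset.univ.filter (fun i : Fin M => (i:ℕ) < M) = Finset.univ := by
  ext i; simp [i.isLt]

lemma sum_snoc (N : ℕ) (t : Fin N → ℤ) (x : ℤ) :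
    (∑ i, Fin.snoc t x i) = (∑ i, t i) + x := by
  rw [Fin.sum_univ_castSucc]
  simp

lemma walkP_snoc (N : ℕ) (m x : ℤ) (t : Fin N → ℤ) (hx : x = -1 ∨ x = 1)
    (ht : WalkP N (m - x) t) (hm : -2 ≤ m) : WalkP (N+1) m (Fin.snoc t x) := by
  obtain ⟨h1, h2, h3⟩ := ht
  refine ⟨?_, ?_, ?_⟩
  · intro j
    refine Fin.lastCases ?_ ?_ j
    · simpa using hx
    · intro i; simpa using h1 i
  · rw [sum_snoc, h2]; ring
  · intro j hj
    rcases Nat.lt_or_ge j (N+1) with h | h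
    · rw [prefix_snoc N t x (by omega)]
      exact h3 j (by omega)
    · have hj' : j = N + 1 := by omega
      subst hj'
      have he : (Finset.univ.filter (fun i : Fin (N+1) => (i:ℕ) < N+1)) = Finset.univ :=
        filter_all (N+1)
      rw [he, sum_snoc, h2]
      linarith

lemma walkP_init (N : ℕ) (m : ℤ) (s : Fin (N+1) → ℤ) (hs : WalkP (N+1) m s) :
    WalkP N (m - s (Fin.last N)) (Fin.init s) := by
  obtain ⟨h1, h2, h3⟩ := hs
  refine ⟨fun j => h1 _, ?_, ?_⟩
  · rw [Fin.sum_univ_castSucc] at h2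
    simp only [Fin.init]
    omega
  · intro j hj
    have := h3 j (by omega)
    rw [← prefix_snoc N (Fin.init s) (s (Fin.last N)) hj, Fin.snoc_init_self]
    exact this

noncomputable def walkEquiv (N : ℕ) (m : ℤ) (hm : -2 ≤ m) :
    {s : Fin (N+1) → ℤ // WalkP (N+1) m s} ≃
      {t : Fin N → ℤ // WalkP N (m-1) t} ⊕ {t : Fin N → ℤ // WalkP N (m+1) t} := by
  classical
  refine
  { toFun := fun s =>
      if hx : s.1 (Fin.last N) = 1 then
        Sum.inl ⟨Fin.init s.1, by have := walkP_init N m s.1 s.2; rwa [hx] at this⟩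
      else
        Sum.inr ⟨Fin.init s.1, by
          have hx' : s.1 (Fin.last N) = -1 := by rcases s.2.1 (Fin.last N) with h | h <;> simp_all
          have := walkP_init N m s.1 s.2
          rw [hx'] at this
          simpa [sub_neg_eq_add] using this⟩
    invFun := fun t =>
      match t with
      | Sum.inl t => ⟨Fin.snoc t.1 1, walkP_snoc N m 1 t.1 (Or.inr rfl) (by simpa using t.2) hm⟩
      | Sum.inr t => ⟨Fin.snoc t.1 (-1), walkP_snoc N m (-1) t.1 (Or.inl rfl)
          (by simpa [sub_neg_eq_add] using t.2) hm⟩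
    left_inv := ?_
    right_inv := ?_ }
  · rintro ⟨s, hs⟩
    by_cases hx : s (Fin.last N) = 1
    · simp only [hx, dif_pos]
      ext i
      simp [← hx, Fin.snoc_init_self]
    · simp only [hx, dif_neg, not_false_iff]
      have hx' : s (Fin.last N) = -1 := by rcases hs.1 (Fin.last N) with h | h <;> simp_all
      ext i
      simp [← hx', Fin.snoc_init_self]
  · rintro (⟨t, ht⟩ | ⟨t, ht⟩)
    · simp
    · have h2 : (Fin.snoc t (-1) : Fin (N+1) → ℤ) (Fin.last N) = -1 := by simp
      simp [h2]

lemma walk_finite (N : ℕ) (m : ℤ) : Finite {s : Fin N → ℤ // WalkP N m s} := by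
  have hsub : {s : Fin N → ℤ | WalkP N m s} ⊆ Set.pi Set.univ (fun _ => ({-1, 1} : Set ℤ)) := by
    intro s hs i _
    have := hs.1 i
    simpa using this
  have hfin : (Set.pi Set.univ (fun _ : Fin N => ({-1, 1} : Set ℤ))).Finite :=
    Set.Finite.pi (fun _ => (Set.finite_singleton (1:ℤ)).insert (-1))
  exact (hfin.subset hsub).to_subtype

lemma g_succ (N : ℕ) (m : ℤ) (hm : -2 ≤ m) : g (N+1) m = g N (m-1) + g N (m+1) := by
  have := walk_finite N (m-1)
  have := walk_finite N (m+1)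
  rw [g, Nat.card_congr (walkEquiv N m hm), Nat.card_sum]
  rfl

lemma g_zero (m : ℤ) : g 0 m = if m = 0 then 1 else 0 := by
  split_ifs with h
  · subst h
    have hall : ∀ s : Fin 0 → ℤ, WalkP 0 0 s := by
      intro s
      refine ⟨fun j => j.elim0, by simp, ?_⟩
      intro j hj
      simp
    rw [g, Nat.card_congr (Equiv.subtypeUnivEquiv hall)]
    exact Nat.card_unique
  · have : IsEmpty {s : Fin 0 → ℤ // WalkP 0 m s} := by
      refine ⟨fun s => h ?_⟩
      have := s.2.2.1
      simpa using this.symm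
    exact Nat.card_of_isEmpty

lemma g_neg (N : ℕ) (m : ℤ) (hm : m < -2) : g N m = 0 := by
  have : IsEmpty {s : Fin N → ℤ // WalkP N m s} := by
    refine ⟨fun s => ?_⟩
    obtain ⟨h1, h2, h3⟩ := s.2
    have := h3 N le_rfl
    rw [filter_all N] at this
    omega
  exact Nat.card_of_isEmpty

noncomputable def c (N : ℕ) (m : ℤ) : ℤ :=
  if -2 ≤ m ∧ 0 ≤ (N:ℤ) + m ∧ ((N:ℤ) + m) % 2 = 0 then
    (N.choose (((N:ℤ)+m)/2).toNat : ℤ) - (N.choose ((((N:ℤ)+m)/2).toNat + 3) : ℤ)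
  else 0

lemma c_zero (m : ℤ) : c 0 m = if m = 0 then 1 else 0 := by
  unfold c
  split_ifs with h1 h2 h2
  · subst h2; norm_num
  · push_cast at h1
    have ht : 1 ≤ (((0:ℕ):ℤ)+m)/2 := by omega
    rw [Nat.choose_eq_zero_of_lt (by omega), Nat.choose_eq_zero_of_lt (by omega)]
    ring
  · exfalso; subst h2; exact h1 (by norm_num)
  · rfl

lemma c_eq (N : ℕ) (m : ℤ) (t : ℕ) (h1 : -2 ≤ m) (h2 : 0 ≤ (N:ℤ)+m)
    (h3 : ((N:ℤ)+m) % 2 = 0) (ht : ((N:ℤ)+m)/2 = (t:ℤ)) :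
    c N m = (N.choose t : ℤ) - (N.choose (t+3) : ℤ) := by
  unfold c
  rw [if_pos ⟨h1, h2, h3⟩, ht]
  simp

lemma c_eq_zero (N : ℕ) (m : ℤ)
    (hh : ¬(-2 ≤ m ∧ 0 ≤ (N:ℤ)+m ∧ ((N:ℤ)+m) % 2 = 0)) : c N m = 0 :=
  if_neg hh

lemma c_pascal (N : ℕ) (m : ℤ) (hm : -2 ≤ m) :
    c (N+1) m = c N (m-1) + c N (m+1) := by
  by_cases hpar : ((N:ℤ) + 1 + m) % 2 = 0
  case neg =>
    rw [c_eq_zero (N+1) m (by push_cast; omega), c_eq_zero N (m-1) (by omega),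
      c_eq_zero N (m+1) (by omega)]
    ring
  by_cases hge : 0 ≤ (N:ℤ) + 1 + m
  case neg =>
    rw [c_eq_zero (N+1) m (by push_cast; omega), c_eq_zero N (m-1) (by omega),
      c_eq_zero N (m+1) (by omega)]
    ring
  by_cases hsmall : (N:ℤ) + m - 1 < 0
  · have h0 : (N:ℤ) + 1 + m = 0 := by omega
    rcases (show m = -1 ∨ m = -2 by omega) with h | h
    · subst h
      have hN : N = 0 := by omega
      subst hN
      rw [c_eq 1 (-1) 0 (by norm_num) (by norm_num) (by norm_num) (by norm_num),
        c_eq_zero 0 (-1-1) (by norm_num),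
        c_eq 0 (-1+1) 0 (by norm_num) (by norm_num) (by norm_num) (by norm_num)]
      decide
    · subst h
      have hN : N = 1 := by omega
      subst hN
      rw [c_eq 2 (-2) 0 (by norm_num) (by norm_num) (by norm_num) (by norm_num),
        c_eq_zero 1 (-2-1) (by norm_num),
        c_eq 1 (-2+1) 0 (by norm_num) (by norm_num) (by norm_num) (by norm_num)]
      decide
  by_cases hm2 : m = -2
  · subst hm2
    obtain ⟨K, hK⟩ : ∃ K : ℕ, N = 2*K+3 := by
      have h1 : N % 2 = 1 := by omega
      have h2 : 3 ≤ N := by omega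
      exact ⟨(N-3)/2, by omega⟩
    subst hK
    rw [c_eq (2*K+3+1) (-2) (K+1) (by norm_num) (by push_cast; omega) (by push_cast; omega)
        (by push_cast; omega),
      c_eq_zero (2*K+3) (-2-1) (by omega),
      c_eq (2*K+3) (-2+1) (K+1) (by norm_num) (by push_cast; omega) (by push_cast; omega)
        (by push_cast; omega)]
    have p1 : (2*K+3+1).choose (K+1) = (2*K+3).choose K + (2*K+3).choose (K+1) :=
      Nat.choose_succ_succ' _ _
    have p2 : (2*K+3+1).choose (K+1+3) = (2*K+3).choose (K+3) + (2*K+3).choose (K+3+1) :=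
      Nat.choose_succ_succ' _ _
    have psym : (2*K+3).choose K = (2*K+3).choose (K+3) := by
      have := Nat.choose_symm (show K+3 ≤ 2*K+3 by omega)
      rw [show 2*K+3-(K+3) = K by omega] at this
      exact this
    rw [p1, p2, psym]
    push_cast
    ring
  · obtain ⟨K, hK⟩ : ∃ K : ℕ, ((N:ℤ)+1+m)/2 = (K:ℤ) + 1 := by
      have h2 : 2 ≤ (N:ℤ)+1+m := by omega
      refine ⟨((((N:ℤ)+1+m)/2) - 1).toNat, ?_⟩
      omega
    rw [c_eq (N+1) m (K+1) hm (by push_cast; omega) (by push_cast; omega)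
        (by push_cast; omega),
      c_eq N (m-1) K (by omega) (by omega) (by omega) (by omega),
      c_eq N (m+1) (K+1) (by omega) (by omega) (by omega) (by push_cast; omega)]
    have p1 : (N+1).choose (K+1) = N.choose K + N.choose (K+1) := Nat.choose_succ_succ' _ _
    have p2 : (N+1).choose (K+1+3) = N.choose (K+3) + N.choose (K+3+1) :=
      Nat.choose_succ_succ' _ _
    rw [p1, p2]
    push_cast
    ring

lemma g_eq_c : ∀ N : ℕ, ∀ m : ℤ, (g N m : ℤ) = c N m := by
  intro N
  induction N with
  | zero =>
    intro m
    rw [g_zero, c_zero]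
    split_ifs <;> norm_num
  | succ N ih =>
    intro m
    by_cases hm : -2 ≤ m
    · rw [g_succ N m hm, c_pascal N m hm]
      push_cast
      rw [ih (m-1), ih (m+1)]
    · rw [g_neg (N+1) m (by omega), c_eq_zero (N+1) m (by intro h; exact hm h.1)]
      norm_num

lemma choose_ratio (N n : ℕ) (hn : n ≤ N) :
    (N.choose (n+3) : ℚ) * ((n:ℚ)+1) * ((n:ℚ)+2) * ((n:ℚ)+3)
      = (N.choose n : ℚ) * ((N:ℚ)-n) * ((N:ℚ)-n-1) * ((N:ℚ)-n-2) := by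
  by_cases h : n + 3 ≤ N
  · have h1 := Nat.choose_succ_right_eq N n
    have h2 := Nat.choose_succ_right_eq N (n+1)
    have h3 := Nat.choose_succ_right_eq N (n+2)
    have c1 : ((N - n : ℕ) : ℚ) = (N:ℚ) - n := by
      push_cast [Nat.cast_sub hn]; ring
    have c2 : ((N - (n+1) : ℕ) : ℚ) = (N:ℚ) - n - 1 := by
      push_cast [Nat.cast_sub (show n+1 ≤ N by omega)]; ring
    have c3 : ((N - (n+2) : ℕ) : ℚ) = (N:ℚ) - n - 2 := by
      push_cast [Nat.cast_sub (show n+2 ≤ N by omega)]; ring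
    have q1 : (N.choose (n+1) : ℚ) * ((n:ℚ)+1) = (N.choose n : ℚ) * ((N:ℚ)-n) := by
      rw [← c1]; exact_mod_cast congrArg (Nat.cast (R := ℚ)) h1
    have q2 : (N.choose (n+2) : ℚ) * ((n:ℚ)+2) = (N.choose (n+1) : ℚ) * ((N:ℚ)-n-1) := by
      rw [← c2]; exact_mod_cast congrArg (Nat.cast (R := ℚ)) h2
    have q3 : (N.choose (n+3) : ℚ) * ((n:ℚ)+3) = (N.choose (n+2) : ℚ) * ((N:ℚ)-n-2) := by
      rw [← c3]; exact_mod_cast congrArg (Nat.cast (R := ℚ)) h3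
    linear_combination ((n:ℚ)+1)*((n:ℚ)+2)*q3 + ((n:ℚ)+1)*((N:ℚ)-n-2)*q2
      + (((N:ℚ)-n-1)*((N:ℚ)-n-2))*q1
  · have h0 : N.choose (n+3) = 0 := Nat.choose_eq_zero_of_lt (by omega)
    rw [h0]
    rcases (show N = n ∨ N = n+1 ∨ N = n+2 by omega) with h | h | h <;> subst h <;> push_cast <;> ring

theorem walk_ge_neg_two_count (N : ℕ) (m : ℤ) (hm0 : 0 ≤ m) (hmN : m ≤ (N : ℤ))
    (heven : Even ((N : ℤ) + m)) (μ : ℤ) (hμ : μ = ((N : ℤ) + m) / 2) :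
    (Nat.card {s : Fin N → ℤ //
        (∀ j, s j = -1 ∨ s j = 1) ∧
        (∑ i, s i) = m ∧
        ∀ j ≤ N, -2 ≤ (∑ i ∈ Finset.univ.filter (fun i : Fin N => (i : ℕ) < j), s i)} : ℚ)
      = ((m : ℚ) + 3) * (((m : ℚ) + 1) * ((m : ℚ) + 5) + 3 * ((N : ℚ) + 1) ^ 2) /
          (4 * ((μ : ℚ) + 1) * ((μ : ℚ) + 2) * ((μ : ℚ) + 3)) *
          (Nat.choose N μ.toNat : ℚ) := by
  have hmod : ((N:ℤ) + m) % 2 = 0 := Int.even_iff.mp heven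
  have hμ0 : 0 ≤ μ := by omega
  have hμN : μ ≤ (N:ℤ) := by omega
  obtain ⟨n, hnμ⟩ : ∃ n : ℕ, (n:ℤ) = μ := ⟨μ.toNat, Int.toNat_of_nonneg hμ0⟩
  rw [show μ.toNat = n by omega]
  have hnN : n ≤ N := by omega
  have hcval : c N m = (N.choose n : ℤ) - (N.choose (n+3) : ℤ) :=
    c_eq N m n (by omega) (by omega) hmod (by omega)
  have hg : (g N m : ℤ) = c N m := g_eq_c N m
  have hcard : (Nat.card {s : Fin N → ℤ //
        (∀ j, s j = -1 ∨ s j = 1) ∧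
        (∑ i, s i) = m ∧
        ∀ j ≤ N, -2 ≤ (∑ i ∈ Finset.univ.filter (fun i : Fin N => (i : ℕ) < j), s i)}) = g N m := rfl
  rw [hcard]
  have hQ : ((g N m : ℤ) : ℚ) = ((N.choose n : ℚ) - (N.choose (n+3) : ℚ)) := by
    rw [hg, hcval]; push_cast; ring
  have : (g N m : ℚ) = ((N.choose n : ℚ) - (N.choose (n+3) : ℚ)) := by exact_mod_cast hQ
  rw [this]
  have hμcast : (μ : ℚ) = (n : ℚ) := by exact_mod_cast hnμ.symm
  have hNcast : (N : ℚ) = 2*(n:ℚ) - (m:ℚ) := by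
    have : (N:ℤ) = 2*(n:ℤ) - m := by clear hcard; omega
    exact_mod_cast this
  have hmcast : (m : ℚ) = 2*(n:ℚ) - (N:ℚ) := by rw [hNcast]; ring
  have hr := choose_ratio N n hnN
  have d1 : (n:ℚ) + 1 ≠ 0 := by positivity
  have d2 : (n:ℚ) + 2 ≠ 0 := by positivity
  have d3 : (n:ℚ) + 3 ≠ 0 := by positivity
  rw [hμcast, hmcast]
  field_simp
  linear_combination (-4 : ℚ) * hr
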